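/- Let F be a field and b, c ∈ F, and let W be the Tate normal form E(b,c): y² + (1−c)xy − by = x³ − bx². If the discriminant Δ of W is nonzero, then P = (0,0) is an affine point of W, and in the group of F-rational points one has 2•P = (b, bc) and 3•P = (c, b − c). -/

import Mathlib

open WeierstrassCurve.Affine WeierstrassCurve.Affine.Point

open Classical in
/-- For a field `F` and `b, c ∈ F`, let `W` be the Tate normal form
`E(b,c) : y² + (1-c)xy - by = x³ - bx²`. If the discriminant `Δ` of `W` is nonzero, then
`P = (0,0)` is a (nonsingular) affine point of `W`, and in the group of `F`-rational points
one has `2 • P = (b, bc)` and `3 • P = (c, b - c)`. -/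
theorem tate_normal_form_two_three_smul (F : Type*) [Field F] (b c : F)
    (W : WeierstrassCurve.Affine F)
    (hW : W = { a₁ := 1 - c, a₂ := -b, a₃ := -b, a₄ := 0, a₆ := 0 })
    (hΔ : W.Δ ≠ 0) :
    ∃ (h : W.Nonsingular 0 0) (h2 : W.Nonsingular b (b * c))
      (h3 : W.Nonsingular c (b - c)),
      (2 : ℤ) • (WeierstrassCurve.Affine.Point.some _ _ h) =
        WeierstrassCurve.Affine.Point.some _ _ h2 ∧
      (3 : ℤ) • (WeierstrassCurve.Affine.Point.some _ _ h) =
        WeierstrassCurve.Affine.Point.some _ _ h3 := by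
  subst hW
  set W : WeierstrassCurve.Affine F :=
    { a₁ := 1 - c, a₂ := -b, a₃ := -b, a₄ := 0, a₆ := 0 } with hW
  have hb : b ≠ 0 := by
    intro hb0
    apply hΔ
    simp [hW, WeierstrassCurve.Δ, WeierstrassCurve.b₂, WeierstrassCurve.b₄,
      WeierstrassCurve.b₆, WeierstrassCurve.b₈, hb0]
  have some_congr : ∀ {x y x' y' : F} (h : W.Nonsingular x y) (h' : W.Nonsingular x' y'),
      x = x' → y = y' → Point.some _ _ h = Point.some _ _ h' := by
    rintro x y x' y' h h' rfl rfl; rfl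
  have e0 : W.Equation 0 0 := by rw [equation_iff]; simp [hW]
  have e2 : W.Equation b (b * c) := by rw [equation_iff]; simp [hW]; ring
  have e3 : W.Equation c (b - c) := by rw [equation_iff]; simp [hW]; ring
  have h : W.Nonsingular 0 0 := (W.equation_iff_nonsingular_of_Δ_ne_zero hΔ).mp e0
  have h2 : W.Nonsingular b (b * c) := (W.equation_iff_nonsingular_of_Δ_ne_zero hΔ).mp e2
  have h3 : W.Nonsingular c (b - c) := (W.equation_iff_nonsingular_of_Δ_ne_zero hΔ).mp e3
  have k2 : (2 : ℤ) • (Point.some _ _ h) = Point.some _ _ h2 := by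
    rw [two_zsmul]
    have hy : (0 : F) ≠ W.negY 0 0 := by
      simp [negY, hW, hb.symm]
    rw [add_self_of_Y_ne hy]
    have hL : W.slope 0 0 0 0 = 0 := by
      rw [slope_of_Y_ne rfl hy]
      simp [hW, negY]
    refine some_congr _ _ ?_ ?_
    · rw [hL]; simp [addX, hL, hW]
    · rw [hL]; simp [addY, negAddY, addX, negY, hL, hW]; ring
  refine ⟨h, h2, h3, k2, ?_⟩
  rw [show (3 : ℤ) = 2 + 1 by norm_num, add_zsmul, one_zsmul, k2]
  have hx : b ≠ (0 : F) := hb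
  rw [add_of_X_ne hx]
  have hL : W.slope b 0 (b * c) 0 = c := by
    rw [slope_of_X_ne hx]
    field_simp
    ring
  refine some_congr _ _ ?_ ?_
  · rw [hL]; simp [addX, hL, hW]; ring
  · rw [hL]; simp [addY, negAddY, addX, negY, hL, hW]; ring
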